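/- For every real number s and every positive integer x, ∑_{j=x+1}^{x²} (μ(j)/j^s) · ∑_{i=1}^{x} (μ(i)/i^s) · H_{⌊x²/(i·j)⌋}(s) = M_{x²}(s) − M_{x}(s). -/

import Mathlib

open Finset ArithmeticFunction

/-- Generalized oscillatory number in power `s`: `M_n(s) = ∑_{k=1}^{n} μ(k)/k^s`. -/
noncomputable def Mgen (s : ℝ) (n : ℕ) : ℝ :=
  ∑ k ∈ Finset.Icc 1 n, (moebius k : ℝ) / (k : ℝ) ^ s

/-- Generalized harmonic number in power `s`: `H_n(s) = ∑_{k=1}^{n} 1/k^s`. -/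
noncomputable def Hgen (s : ℝ) (n : ℕ) : ℝ :=
  ∑ k ∈ Finset.Icc 1 n, 1 / (k : ℝ) ^ s

lemma Hgen_zero (s : ℝ) : Hgen s 0 = 0 := by simp [Hgen]

/-- hyperbola reindexing -/
lemma hyp_reindex (m : ℕ) (f : ℕ → ℕ → ℝ) :
    ∑ j ∈ Finset.Icc 1 m, ∑ k ∈ Finset.Icc 1 (m / j), f j k
      = ∑ n ∈ Finset.Icc 1 m, ∑ p ∈ n.divisorsAntidiagonal, f p.1 p.2 := by
  rw [Finset.sum_sigma', Finset.sum_sigma']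
  refine Finset.sum_nbij' (fun t => ⟨t.1 * t.2, (t.1, t.2)⟩) (fun t => ⟨t.2.1, t.2.2⟩)
    ?_ ?_ ?_ ?_ ?_
  · rintro ⟨j, k⟩ ht
    simp only [Finset.mem_sigma, Finset.mem_Icc] at ht ⊢
    obtain ⟨⟨hj1, hjm⟩, hk1, hkm⟩ := ht
    have hj0 : 0 < j := hj1
    have hjk : j * k ≤ m := by
      rw [mul_comm]
      exact (Nat.le_div_iff_mul_le hj0).mp hkm
    refine ⟨⟨Nat.one_le_iff_ne_zero.mpr (by positivity), hjk⟩, ?_⟩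
    rw [Nat.mem_divisorsAntidiagonal]
    exact ⟨rfl, by positivity⟩
  · rintro ⟨n, a, b⟩ ht
    simp only [Finset.mem_sigma, Finset.mem_Icc, Nat.mem_divisorsAntidiagonal] at ht ⊢
    obtain ⟨⟨hn1, hnm⟩, hab, hn0⟩ := ht
    have ha0 : 0 < a := by
      rcases Nat.eq_zero_or_pos a with h | h
      · exfalso; apply hn0; rw [← hab, h, zero_mul]
      · exact h
    have hb0 : 0 < b := by
      rcases Nat.eq_zero_or_pos b with h | h
      · exfalso; apply hn0; rw [← hab, h, mul_zero]
      · exact h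
    refine ⟨⟨ha0, ?_⟩, hb0, ?_⟩
    · calc a ≤ a * b := Nat.le_mul_of_pos_right a hb0
        _ = n := hab
        _ ≤ m := hnm
    · rw [Nat.le_div_iff_mul_le ha0, mul_comm, hab]
      exact hnm
  · rintro ⟨j, k⟩ _; rfl
  · rintro ⟨n, a, b⟩ ht
    simp only [Finset.mem_sigma, Nat.mem_divisorsAntidiagonal] at ht
    obtain ⟨_, hab, _⟩ := ht
    simp [hab]
  · rintro ⟨j, k⟩ _; rfl

lemma innerSumMoeb (s : ℝ) (n : ℕ) (hn : n ≠ 0) :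
    ∑ p ∈ n.divisorsAntidiagonal, ((moebius p.1 : ℝ) / (p.1 : ℝ) ^ s) * (1 / (p.2 : ℝ) ^ s)
      = if n = 1 then 1 else 0 := by
  have key : ∀ p ∈ n.divisorsAntidiagonal,
      ((moebius p.1 : ℝ) / (p.1 : ℝ) ^ s) * (1 / (p.2 : ℝ) ^ s)
        = (moebius p.1 : ℝ) / (n : ℝ) ^ s := by
    rintro ⟨a, b⟩ hp
    rw [Nat.mem_divisorsAntidiagonal] at hp
    obtain ⟨hab, _⟩ := hp
    have : ((n : ℝ)) ^ s = (a : ℝ) ^ s * (b : ℝ) ^ s := by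
      rw [← hab]
      push_cast
      exact Real.mul_rpow (Nat.cast_nonneg a) (Nat.cast_nonneg b)
    rw [div_mul_div_comm, mul_one, this]
  rw [Finset.sum_congr rfl key, ← Finset.sum_div]
  have : ∑ p ∈ n.divisorsAntidiagonal, (moebius p.1 : ℝ)
      = ((∑ p ∈ n.divisorsAntidiagonal, moebius p.1 : ℤ) : ℝ) := by push_cast; ring
  rw [this]
  have h2 : ∑ p ∈ n.divisorsAntidiagonal, moebius p.1
      = ∑ d ∈ n.divisors, moebius d := by
    rw [Nat.sum_divisorsAntidiagonal (fun a _ => moebius a)]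
  rw [h2]
  have h3 : ∑ d ∈ n.divisors, moebius d = (moebius * (zeta : ArithmeticFunction ℤ)) n := by
    rw [coe_mul_zeta_apply]
  rw [h3, moebius_mul_coe_zeta, ArithmeticFunction.one_apply]
  split_ifs with h
  · subst h; simp
  · simp

lemma core (s : ℝ) (m : ℕ) (hm : 1 ≤ m) :
    ∑ j ∈ Finset.Icc 1 m, (moebius j : ℝ) / (j : ℝ) ^ s * Hgen s (m / j) = 1 := by
  have expand : ∑ j ∈ Finset.Icc 1 m, (moebius j : ℝ) / (j : ℝ) ^ s * Hgen s (m / j)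
      = ∑ j ∈ Finset.Icc 1 m, ∑ k ∈ Finset.Icc 1 (m / j),
          ((moebius j : ℝ) / (j : ℝ) ^ s) * (1 / (k : ℝ) ^ s) := by
    apply Finset.sum_congr rfl
    intro j _
    rw [Hgen, Finset.mul_sum]
  rw [expand, hyp_reindex m (fun j k => ((moebius j : ℝ) / (j : ℝ) ^ s) * (1 / (k : ℝ) ^ s))]
  have : ∀ n ∈ Finset.Icc 1 m,
      (∑ p ∈ n.divisorsAntidiagonal,
        ((moebius p.1 : ℝ) / (p.1 : ℝ) ^ s) * (1 / (p.2 : ℝ) ^ s))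
        = if n = 1 then 1 else 0 := by
    intro n hn
    rw [Finset.mem_Icc] at hn
    exact innerSumMoeb s n (by omega)
  rw [Finset.sum_congr rfl this, Finset.sum_ite_eq' (Finset.Icc 1 m) 1 (fun _ => (1:ℝ))]
  simp [hm]


lemma sum_split (f : ℕ → ℝ) {a b : ℕ} (h : a ≤ b) :
    ∑ n ∈ Finset.Icc 1 b, f n
      = ∑ n ∈ Finset.Icc 1 a, f n + ∑ n ∈ Finset.Icc (a + 1) b, f n := by
  have h1 : ∀ c : ℕ, Finset.Icc 1 c = Finset.Ioc 0 c := by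
    intro c; ext t; simp [Finset.mem_Icc, Finset.mem_Ioc]; omega
  have h2 : Finset.Icc (a + 1) b = Finset.Ioc a b := by
    ext t; simp [Finset.mem_Icc, Finset.mem_Ioc]
  rw [h1, h1, h2, Finset.sum_Ioc_consecutive f (Nat.zero_le a) h]

/-- extended core lemma with shift -/
lemma core' (s : ℝ) (N i : ℕ) (hi : 1 ≤ i) (hiN : i ≤ N) :
    ∑ j ∈ Finset.Icc 1 N, (moebius j : ℝ) / (j : ℝ) ^ s * Hgen s (N / (i * j)) = 1 := by
  set m := N / i with hm
  have hm1 : 1 ≤ m := (Nat.one_le_div_iff hi).mpr hiN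
  have hmN : m ≤ N := Nat.div_le_self N i
  rw [sum_split _ hmN]
  have t2 : ∑ j ∈ Finset.Icc (m + 1) N,
      (moebius j : ℝ) / (j : ℝ) ^ s * Hgen s (N / (i * j)) = 0 := by
    apply Finset.sum_eq_zero
    intro j hj
    rw [Finset.mem_Icc] at hj
    have hij : N < i * j := by
      have h1 : i * m + N % i = N := Nat.div_add_mod N i
      have h2 : N % i < i := Nat.mod_lt _ (by omega)
      have h3 : N < i * (m + 1) := by
        rw [Nat.mul_succ]
        omega
      exact lt_of_lt_of_le h3 (Nat.mul_le_mul_left i hj.1)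
    rw [Nat.div_eq_of_lt hij, Hgen_zero, mul_zero]
  have t1 : ∑ j ∈ Finset.Icc 1 m,
      (moebius j : ℝ) / (j : ℝ) ^ s * Hgen s (N / (i * j))
        = ∑ j ∈ Finset.Icc 1 m, (moebius j : ℝ) / (j : ℝ) ^ s * Hgen s (m / j) := by
    apply Finset.sum_congr rfl
    intro j _
    rw [hm, ← Nat.div_div_eq_div_mul]
  rw [t1, t2, core s m hm1, add_zero]

theorem stmt_9 (s : ℝ) (x : ℕ) (hx : 0 < x) :
    ∑ j ∈ Finset.Icc (x + 1) (x ^ 2), ((moebius j : ℝ) / (j : ℝ) ^ s) *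
      ∑ i ∈ Finset.Icc 1 x, ((moebius i : ℝ) / (i : ℝ) ^ s) * Hgen s (x ^ 2 / (i * j)) =
    Mgen s (x ^ 2) - Mgen s x := by
  set N := x ^ 2 with hN
  have hxN : x ≤ N := Nat.le_self_pow (by norm_num) x
  -- the full grid sum equals Mgen s N
  have grid : ∑ i ∈ Finset.Icc 1 N, ∑ j ∈ Finset.Icc 1 N,
      ((moebius i : ℝ) / (i : ℝ) ^ s) * (((moebius j : ℝ) / (j : ℝ) ^ s)
        * Hgen s (N / (i * j))) = Mgen s N := by
    rw [Mgen]
    apply Finset.sum_congr rfl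
    intro i hi
    rw [Finset.mem_Icc] at hi
    rw [← Finset.mul_sum, core' s N i hi.1 hi.2, mul_one]
  -- the rows with i ≤ x sum to Mgen s x
  have rows : ∑ i ∈ Finset.Icc 1 x, ∑ j ∈ Finset.Icc 1 N,
      ((moebius i : ℝ) / (i : ℝ) ^ s) * (((moebius j : ℝ) / (j : ℝ) ^ s)
        * Hgen s (N / (i * j))) = Mgen s x := by
    rw [Mgen]
    apply Finset.sum_congr rfl
    intro i hi
    rw [Finset.mem_Icc] at hi
    rw [← Finset.mul_sum, core' s N i hi.1 (le_trans hi.2 hxN), mul_one]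
  -- the corner with i > x, j > x vanishes
  have corner : ∑ i ∈ Finset.Icc (x + 1) N, ∑ j ∈ Finset.Icc (x + 1) N,
      ((moebius i : ℝ) / (i : ℝ) ^ s) * (((moebius j : ℝ) / (j : ℝ) ^ s)
        * Hgen s (N / (i * j))) = 0 := by
    apply Finset.sum_eq_zero
    intro i hi
    apply Finset.sum_eq_zero
    intro j hj
    rw [Finset.mem_Icc] at hi hj
    have hij : N < i * j := by
      calc N = x ^ 2 := hN
        _ < (x + 1) * (x + 1) := by nlinarith
        _ ≤ i * j := Nat.mul_le_mul hi.1 hj.1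
    rw [Nat.div_eq_of_lt hij, Hgen_zero, mul_zero, mul_zero]
  -- split the grid
  have split1 : ∑ i ∈ Finset.Icc 1 N, ∑ j ∈ Finset.Icc 1 N,
      ((moebius i : ℝ) / (i : ℝ) ^ s) * (((moebius j : ℝ) / (j : ℝ) ^ s)
        * Hgen s (N / (i * j)))
      = ∑ i ∈ Finset.Icc 1 x, ∑ j ∈ Finset.Icc 1 N,
          ((moebius i : ℝ) / (i : ℝ) ^ s) * (((moebius j : ℝ) / (j : ℝ) ^ s)
            * Hgen s (N / (i * j)))
        + ∑ i ∈ Finset.Icc (x + 1) N, ∑ j ∈ Finset.Icc 1 N,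
          ((moebius i : ℝ) / (i : ℝ) ^ s) * (((moebius j : ℝ) / (j : ℝ) ^ s)
            * Hgen s (N / (i * j))) :=
    sum_split _ hxN
  have split2 : ∑ i ∈ Finset.Icc (x + 1) N, ∑ j ∈ Finset.Icc 1 N,
      ((moebius i : ℝ) / (i : ℝ) ^ s) * (((moebius j : ℝ) / (j : ℝ) ^ s)
        * Hgen s (N / (i * j)))
      = ∑ i ∈ Finset.Icc (x + 1) N, ∑ j ∈ Finset.Icc 1 x,
          ((moebius i : ℝ) / (i : ℝ) ^ s) * (((moebius j : ℝ) / (j : ℝ) ^ s)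
            * Hgen s (N / (i * j)))
        + ∑ i ∈ Finset.Icc (x + 1) N, ∑ j ∈ Finset.Icc (x + 1) N,
          ((moebius i : ℝ) / (i : ℝ) ^ s) * (((moebius j : ℝ) / (j : ℝ) ^ s)
            * Hgen s (N / (i * j))) := by
    rw [← Finset.sum_add_distrib]
    apply Finset.sum_congr rfl
    intro i _
    exact sum_split _ hxN
  -- identify the LHS with the T-block
  have lhs_eq : ∑ j ∈ Finset.Icc (x + 1) N, ((moebius j : ℝ) / (j : ℝ) ^ s) *
      ∑ i ∈ Finset.Icc 1 x, ((moebius i : ℝ) / (i : ℝ) ^ s) * Hgen s (N / (i * j))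
      = ∑ i ∈ Finset.Icc (x + 1) N, ∑ j ∈ Finset.Icc 1 x,
          ((moebius i : ℝ) / (i : ℝ) ^ s) * (((moebius j : ℝ) / (j : ℝ) ^ s)
            * Hgen s (N / (i * j))) := by
    apply Finset.sum_congr rfl
    intro j _
    rw [Finset.mul_sum]
    apply Finset.sum_congr rfl
    intro i _
    rw [mul_comm j i]
  rw [lhs_eq]
  have := grid
  rw [split1, split2, rows, corner, add_zero] at this
  linarith
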